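/- Let m > 0 and let Z be a real Gaussian random variable with mean −m/2 and variance m. Then E[ max(1 − e^Z, 0) ] = 2Φ(√m / 2) − 1, where Φ is the cumulative distribution function of the standard normal distribution. -/

import Mathlib

noncomputable section

open ProbabilityTheory MeasureTheory Real
open scoped NNReal ENNReal

lemma pdf_shift (m : ℝ) (hm : 0 < m) (z : ℝ) :
    Real.exp z * gaussianPDFReal (-m / 2) (Real.toNNReal m) z
      = gaussianPDFReal (m / 2) (Real.toNNReal m) z := by
  have hc : ((Real.toNNReal m : ℝ≥0) : ℝ) = m := Real.coe_toNNReal m hm.le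
  simp only [gaussianPDFReal, hc]
  rw [mul_comm (Real.exp z), mul_assoc, ← Real.exp_add]
  congr 2
  field_simp
  ring

lemma measure_shift (m : ℝ) (hm : 0 < m) :
    gaussianReal (m / 2) (Real.toNNReal m)
      = (gaussianReal (-m / 2) (Real.toNNReal m)).withDensity
          (fun z => ENNReal.ofReal (Real.exp z)) := by
  have hv : Real.toNNReal m ≠ 0 := by
    simp [Real.toNNReal_eq_zero, not_le, hm]
  rw [gaussianReal_of_var_ne_zero _ hv, gaussianReal_of_var_ne_zero _ hv,
    ← withDensity_mul _ (measurable_gaussianPDF _ _)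
      (Real.measurable_exp.ennreal_ofReal)]
  congr 1
  funext z
  simp only [Pi.mul_apply, gaussianPDF]
  rw [← ENNReal.ofReal_mul (gaussianPDFReal_nonneg _ _ _), mul_comm, pdf_shift m hm]

lemma gauss_Iic (μ0 : ℝ) (v : ℝ≥0) (hv : v ≠ 0) (x : ℝ) :
    gaussianReal μ0 v (Set.Iic x)
      = gaussianReal 0 1 (Set.Iic ((x - μ0) / Real.sqrt v)) := by
  have hvpos : (0:ℝ) < (v:ℝ) := by
    have := v.coe_nonneg
    rcases this.lt_or_eq with h | h
    · exact h
    · exact absurd (by exact_mod_cast h.symm) hv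
  have hs : (0:ℝ) < Real.sqrt v := Real.sqrt_pos.mpr hvpos
  have hmap : gaussianReal μ0 v
      = (gaussianReal 0 1).map (fun z => Real.sqrt v * z + μ0) := by
    have h1 : (gaussianReal (0:ℝ) 1).map (fun z => Real.sqrt v * z)
        = gaussianReal 0 v := by
      rw [show (fun z => Real.sqrt (v:ℝ) * z) = (Real.sqrt v * ·) from rfl,
        gaussianReal_map_const_mul]
      congr 1
      · ring
      · ext
        simp [Real.sq_sqrt hvpos.le]
    have h2 : (gaussianReal (0:ℝ) v).map (· + μ0) = gaussianReal μ0 v := by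
      rw [gaussianReal_map_add_const]
      congr 1
      ring
    rw [← h2, ← h1, Measure.map_map (measurable_id'.add_const _)
      (measurable_const_mul _)]
    rfl
  rw [hmap, Measure.map_apply (by fun_prop) measurableSet_Iic]
  congr 1
  ext z
  simp only [Set.mem_preimage, Set.mem_Iic]
  rw [le_div_iff₀ hs]
  constructor <;> intro h <;> nlinarith


/-- The cumulative distribution function of the standard normal distribution. -/
def stdNormalCDF (x : ℝ) : ℝ := (gaussianReal 0 1 (Set.Iic x)).toReal

lemma stdNormalCDF_neg (a : ℝ) : stdNormalCDF (-a) = 1 - stdNormalCDF a := by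
  have hneg : (gaussianReal (0:ℝ) 1).map ((-1 : ℝ) * ·) = gaussianReal 0 1 := by
    have hvar : (NNReal.mk ((-1:ℝ)^2) (sq_nonneg _) : ℝ≥0) * 1 = 1 := by
      ext; norm_num
    rw [gaussianReal_map_const_mul, hvar, mul_zero]
  have h1 : gaussianReal (0:ℝ) 1 (Set.Iic (-a)) = gaussianReal 0 1 (Set.Ici a) := by
    conv_lhs => rw [← hneg]
    rw [Measure.map_apply (by fun_prop) measurableSet_Iic]
    congr 1
    ext z
    simp only [Set.mem_preimage, Set.mem_Iic, Set.mem_Ici]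
    constructor <;> intro h <;> linarith
  have h0 : gaussianReal (0:ℝ) 1 {a} = 0 :=
    gaussianReal_absolutelyContinuous 0 one_ne_zero (Real.volume_singleton)
  have h2 : gaussianReal (0:ℝ) 1 (Set.Ici a) = gaussianReal 0 1 (Set.Ioi a) := by
    refine le_antisymm ?_ (measure_mono Set.Ioi_subset_Ici_self)
    calc gaussianReal (0:ℝ) 1 (Set.Ici a) = gaussianReal 0 1 (Set.Ioi a ∪ {a}) := by
          rw [Set.Ioi_union_left]
      _ ≤ gaussianReal 0 1 (Set.Ioi a) + gaussianReal 0 1 {a} := measure_union_le _ _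
      _ = gaussianReal 0 1 (Set.Ioi a) := by rw [h0, add_zero]
  have h3 : gaussianReal (0:ℝ) 1 (Set.Ioi a) = 1 - gaussianReal 0 1 (Set.Iic a) := by
    rw [← Set.compl_Iic, prob_compl_eq_one_sub measurableSet_Iic]
  rw [stdNormalCDF, h1, h2, h3, ENNReal.toReal_sub_of_le prob_le_one ENNReal.one_ne_top]
  simp [stdNormalCDF]

theorem stmt_3 (m : ℝ) (hm : 0 < m) :
    ∫ z, max (1 - Real.exp z) 0 ∂(gaussianReal (-m / 2) (Real.toNNReal m)) =
      2 * stdNormalCDF (Real.sqrt m / 2) - 1 := by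
  set μ := gaussianReal (-m / 2) (Real.toNNReal m) with hμ
  have hv : Real.toNNReal m ≠ 0 := by simp [Real.toNNReal_eq_zero, not_le, hm]
  have hc : ((Real.toNNReal m : ℝ≥0) : ℝ) = m := Real.coe_toNNReal m hm.le
  have hss : Real.sqrt m * Real.sqrt m = m := Real.mul_self_sqrt hm.le
  have hsne : Real.sqrt m ≠ 0 := by positivity
  -- rewrite max as indicator
  have hmax : ∀ z : ℝ, max (1 - Real.exp z) 0
      = (Set.Iic (0:ℝ)).indicator (fun z => 1 - Real.exp z) z := by
    intro z
    by_cases hz : z ≤ 0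
    · rw [Set.indicator_of_mem (Set.mem_Iic.mpr hz)]
      exact max_eq_left (by simp [Real.exp_le_one_iff.mpr hz])
    · rw [Set.indicator_of_notMem (by simpa using hz)]
      push_neg at hz
      exact max_eq_right (by simp [Real.one_le_exp_iff.mpr hz.le])
  rw [show (fun z => max (1 - Real.exp z) 0)
      = (Set.Iic (0:ℝ)).indicator (fun z => 1 - Real.exp z) from funext hmax,
    integral_indicator measurableSet_Iic]
  -- integrability
  have hint_exp : IntegrableOn Real.exp (Set.Iic (0:ℝ)) μ := by
    refine Measure.integrableOn_of_bounded (M := 1) (measure_ne_top _ _)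
      Real.continuous_exp.aestronglyMeasurable ?_
    filter_upwards [ae_restrict_mem measurableSet_Iic] with z hz
    rw [Real.norm_eq_abs, abs_of_pos (Real.exp_pos z)]
    exact Real.exp_le_one_iff.mpr hz
  have hint_one : IntegrableOn (fun _ : ℝ => (1:ℝ)) (Set.Iic (0:ℝ)) μ :=
    integrableOn_const (measure_ne_top _ _)
  rw [integral_sub hint_one hint_exp]
  -- constant part
  have hconst : ∫ _ in Set.Iic (0:ℝ), (1:ℝ) ∂μ = (μ (Set.Iic 0)).toReal := by
    simp [setIntegral_const, Measure.real]
  -- exponential part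
  have hexp : ∫ z in Set.Iic (0:ℝ), Real.exp z ∂μ
      = (gaussianReal (m / 2) (Real.toNNReal m) (Set.Iic 0)).toReal := by
    rw [measure_shift m hm, ← hμ, withDensity_apply _ measurableSet_Iic,
      ← ofReal_integral_eq_lintegral_ofReal hint_exp
        (ae_of_all _ fun z => (Real.exp_pos z).le),
      ENNReal.toReal_ofReal (integral_nonneg fun z => (Real.exp_pos z).le)]
  -- standardize the two measures
  have harg1 : ((0:ℝ) - (-m / 2)) / Real.sqrt m = Real.sqrt m / 2 := by
    field_simp
    linarith
  have harg2 : ((0:ℝ) - m / 2) / Real.sqrt m = -(Real.sqrt m / 2) := by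
    field_simp
    linarith
  have hμ0 : μ (Set.Iic 0) = gaussianReal 0 1 (Set.Iic (Real.sqrt m / 2)) := by
    rw [hμ, gauss_Iic _ _ hv, hc, harg1]
  have hν0 : gaussianReal (m / 2) (Real.toNNReal m) (Set.Iic 0)
      = gaussianReal 0 1 (Set.Iic (-(Real.sqrt m / 2))) := by
    rw [gauss_Iic _ _ hv, hc, harg2]
  rw [hconst, hexp, hμ0, hν0]
  rw [show ((gaussianReal 0 1) (Set.Iic (-(Real.sqrt m / 2)))).toReal
      = stdNormalCDF (-(Real.sqrt m / 2)) from rfl,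
    show ((gaussianReal 0 1) (Set.Iic (Real.sqrt m / 2))).toReal
      = stdNormalCDF (Real.sqrt m / 2) from rfl,
    stdNormalCDF_neg]
  ring
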